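/- Let $q = 1$, Hilbert space $U$ with orthonormal basis $(\phi_i)$, weights $w_i \ge w_{\min} > 0$, $\mathcal{R}_1(u) = \sum_i w_i|\langle\phi_i,u\rangle|$, $u^\dagger \in U$, and $\xi \in U$ satisfying $\langle\phi_i,\xi\rangle \in w_i \cdot \partial|\cdot|(\langle\phi_i,u^\dagger\rangle)$ for each $i$ (i.e. $\xi \in \partial\mathcal{R}_1(u^\dagger)$). Set $J = \{i : |\langle\phi_i,\xi\rangle| \ge w_{\min}\}$, suppose $\langle\phi_i, u^\dagger\rangle = 0$ for all $i \notin J$, and let $m = \sup_{i\notin J}|\langle\phi_i,\xi\rangle| < w_{\min}$. Then for all $u \in \operatorname{dom}(\mathcal{R}_1)$: $\left(\sum_{i\notin J}|\langle\phi_i,u\rangle|^2\right)^{1/2} \le \frac{1}{w_{\min}-m}\left(\mathcal{R}_1(u) - \mathcal{R}_1(u^\dagger) - \langle\xi, u - u^\dagger\rangle\right)$. -/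

import Mathlib

open scoped InnerProductSpace

theorem q_one_offsupport_estimate
    {U : Type*} [NormedAddCommGroup U] [InnerProductSpace ℝ U] [CompleteSpace U]
    (b : HilbertBasis ℕ ℝ U)
    (w : ℕ → ℝ) (wmin : ℝ) (hwmin : 0 < wmin) (hw : ∀ i, wmin ≤ w i)
    (udag ξ : U)
    (hsub : ∀ i, |⟪b i, ξ⟫_ℝ| ≤ w i ∧
      (⟪b i, udag⟫_ℝ ≠ 0 → ⟪b i, ξ⟫_ℝ = w i * Real.sign ⟪b i, udag⟫_ℝ))
    (J : Set ℕ) (hJ : J = {i : ℕ | wmin ≤ |⟪b i, ξ⟫_ℝ|})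
    (hsupp : ∀ i ∉ J, ⟪b i, udag⟫_ℝ = 0)
    (m : ℝ) (hm : m = ⨆ i : {i : ℕ // i ∉ J}, |⟪b i.1, ξ⟫_ℝ|) (hmlt : m < wmin)
    (u : U)
    (hu : Summable (fun i => w i * |⟪b i, u⟫_ℝ|))
    (hudagsum : Summable (fun i => w i * |⟪b i, udag⟫_ℝ|)) :
    (∑' i : {i : ℕ // i ∉ J}, |⟪b i.1, u⟫_ℝ| ^ 2) ^ ((1 : ℝ) / 2)
      ≤ (wmin - m)⁻¹ *
        ((∑' i, w i * |⟪b i, u⟫_ℝ|) - (∑' i, w i * |⟪b i, udag⟫_ℝ|)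
          - ⟪ξ, u - udag⟫_ℝ) := by
  set ui : ℕ → ℝ := fun i => ⟪b i, u⟫_ℝ with hui
  set di : ℕ → ℝ := fun i => ⟪b i, udag⟫_ℝ with hdi
  set xi : ℕ → ℝ := fun i => ⟪b i, ξ⟫_ℝ with hxi
  have hm0 : 0 ≤ m := by
    rw [hm]
    exact Real.iSup_nonneg (fun i => abs_nonneg _)
  -- bound for indices off J
  have hJlt : ∀ j, j ∉ J → |xi j| < wmin := by
    intro j hj
    by_contra hc
    push_neg at hc
    exact hj (by rw [hJ]; exact hc)
  have hbdd : BddAbove (Set.range fun i : {i : ℕ // i ∉ J} => |xi i.1|) := by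
    refine ⟨wmin, ?_⟩
    rintro x ⟨i, rfl⟩
    exact (hJlt i.1 i.2).le
  have hxm : ∀ i ∉ J, |xi i| ≤ m := by
    intro i hi
    rw [hm]
    exact le_ciSup hbdd ⟨i, hi⟩
  -- summable key series
  have hxu : Summable (fun i => xi i * (ui i - di i)) := by
    have := b.summable_inner_mul_inner ξ (u - udag)
    refine this.congr fun i => ?_
    simp [hxi, hui, hdi, real_inner_comm, inner_sub_right]
  have htsum_xu : ∑' i, xi i * (ui i - di i) = ⟪ξ, u - udag⟫_ℝ := by
    rw [← b.tsum_inner_mul_inner ξ (u - udag)]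
    refine tsum_congr fun i => ?_
    simp [hxi, hui, hdi, real_inner_comm, inner_sub_right]
  -- the per-index term
  set t : ℕ → ℝ := fun i => w i * |ui i| - w i * |di i| - xi i * (ui i - di i) with ht
  have hxid : ∀ i, xi i * di i = w i * |di i| := by
    intro i
    by_cases h : di i = 0
    · simp [h]
    · have h2 : xi i = w i * Real.sign (di i) := (hsub i).2 h
      rcases lt_or_gt_of_ne h with hneg | hpos
      · rw [h2, Real.sign_of_neg hneg, abs_of_neg hneg]; ring
      · rw [h2, Real.sign_of_pos hpos, abs_of_pos hpos]; ring
  have htnn : ∀ i, 0 ≤ t i := by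
    intro i
    have h1 : xi i * ui i ≤ w i * |ui i| := by
      calc xi i * ui i ≤ |xi i * ui i| := le_abs_self _
        _ = |xi i| * |ui i| := abs_mul _ _
        _ ≤ w i * |ui i| := by
            exact mul_le_mul_of_nonneg_right (hsub i).1 (abs_nonneg _)
    have h2 := hxid i
    simp only [ht]
    nlinarith [h2]
  have htJ : ∀ i ∉ J, (wmin - m) * |ui i| ≤ t i := by
    intro i hi
    have hd : di i = 0 := hsupp i hi
    have h1 : xi i * ui i ≤ m * |ui i| := by
      calc xi i * ui i ≤ |xi i| * |ui i| := by
            rw [← abs_mul]; exact le_abs_self _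
        _ ≤ m * |ui i| := mul_le_mul_of_nonneg_right (hxm i hi) (abs_nonneg _)
    have h2 : wmin * |ui i| ≤ w i * |ui i| :=
      mul_le_mul_of_nonneg_right (hw i) (abs_nonneg _)
    simp only [ht, hd, abs_zero, mul_zero, sub_zero]
    linarith
  have hts : Summable t := (hu.sub hudagsum).sub hxu
  have hD : ∑' i, t i = (∑' i, w i * |ui i|) - (∑' i, w i * |di i|)
      - ⟪ξ, u - udag⟫_ℝ := by
    rw [ht, ← htsum_xu, (hu.sub hudagsum).tsum_sub hxu, hu.tsum_sub hudagsum]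
  -- summability of |ui| restricted
  have hsu : Summable (fun i => |ui i|) := by
    apply Summable.of_nonneg_of_le (fun i => abs_nonneg _)
      (fun i => ?_) (hu.mul_left wmin⁻¹)
    have h2 : wmin * |ui i| ≤ w i * |ui i| :=
      mul_le_mul_of_nonneg_right (hw i) (abs_nonneg _)
    rw [← mul_le_mul_iff_right₀ hwmin, ← mul_assoc, mul_inv_cancel₀ (ne_of_gt hwmin), one_mul]
    exact h2
  have hsu2 : Summable (fun i : {i : ℕ // i ∉ J} => |ui i.1|) :=
    hsu.subtype {i : ℕ | i ∉ J}
  set A : ℝ := ∑' i : {i : ℕ // i ∉ J}, |ui i.1| with hA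
  have hA0 : 0 ≤ A := tsum_nonneg fun i => abs_nonneg _
  -- summability of squares
  have hsq : Summable (fun i : {i : ℕ // i ∉ J} => |ui i.1| ^ 2) := by
    have h0 : Summable (fun i : ℕ => |ui i| ^ 2) := by
      refine (b.summable_inner_mul_inner u u).congr fun i => ?_
      rw [sq_abs, sq, hui, real_inner_comm]
    exact h0.subtype {i : ℕ | i ∉ J}
  -- (∑ c²)^{1/2} ≤ A
  have hstep1 : (∑' i : {i : ℕ // i ∉ J}, |ui i.1| ^ 2) ^ ((1 : ℝ) / 2) ≤ A := by
    have hle : (∑' i : {i : ℕ // i ∉ J}, |ui i.1| ^ 2) ≤ A ^ 2 := by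
      have h1 : ∀ i : {i : ℕ // i ∉ J}, |ui i.1| ^ 2 ≤ |ui i.1| * A := by
        intro i
        rw [sq]
        exact mul_le_mul_of_nonneg_left
          (Summable.le_tsum hsu2 i fun j _ => abs_nonneg _) (abs_nonneg _)
      calc (∑' i : {i : ℕ // i ∉ J}, |ui i.1| ^ 2)
          ≤ ∑' i : {i : ℕ // i ∉ J}, |ui i.1| * A :=
            Summable.tsum_le_tsum h1 hsq (hsu2.mul_right A)
        _ = A * A := by rw [tsum_mul_right]
        _ = A ^ 2 := (sq A).symm
    calc (∑' i : {i : ℕ // i ∉ J}, |ui i.1| ^ 2) ^ ((1 : ℝ) / 2)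
        ≤ (A ^ 2) ^ ((1 : ℝ) / 2) :=
          Real.rpow_le_rpow (tsum_nonneg fun i => sq_nonneg _) hle (by norm_num)
      _ = A := by
          rw [← Real.rpow_natCast A 2, ← Real.rpow_mul hA0]
          norm_num
  -- (wmin - m) * A ≤ ∑ t
  have hstep2 : (wmin - m) * A ≤ ∑' i, t i := by
    calc (wmin - m) * A = ∑' i : {i : ℕ // i ∉ J}, (wmin - m) * |ui i.1| := by
          rw [hA, tsum_mul_left]
      _ ≤ ∑' i : {i : ℕ // i ∉ J}, t i.1 :=
          Summable.tsum_le_tsum (fun i => htJ i.1 i.2) (hsu2.mul_left _)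
            (hts.subtype {i : ℕ | i ∉ J})
      _ ≤ ∑' i, t i := Summable.tsum_subtype_le t {i : ℕ | i ∉ J} htnn hts
  have hpos : 0 < wmin - m := by linarith
  calc (∑' i : {i : ℕ // i ∉ J}, |ui i.1| ^ 2) ^ ((1 : ℝ) / 2) ≤ A := hstep1
    _ ≤ (wmin - m)⁻¹ * ((∑' i, w i * |ui i|) - (∑' i, w i * |di i|)
          - ⟪ξ, u - udag⟫_ℝ) := by
        rw [← hD, le_inv_mul_iff₀ hpos]
        exact hstep2
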